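/- arXiv:2504.20715 — 2 statements merged into one kernel-verified Lean document; each statement's English description precedes it below -/
import Mathlib

section
/- Let d ≥ 1, let A : ℝ → Matrix (Fin d) (Fin d) ℝ be continuous, and let J : ℝ → Matrix (Fin d) (Fin d) ℝ be differentiable with J'(t) = A(t) · J(t) for all t ∈ ℝ. Then det(J(t)) = det(J(0)) · exp(∫_0^t trace(A(s)) ds) for all t ∈ ℝ. In particular, if trace(A(t)) = 0 for all t (the divergence-free case arising from Liouville's theorem) and J(0) is the identity matrix, then det(J(t)) = 1 for all t. -/
open Matrix Finset

/-- Jacobi-style derivative of the determinant of a matrix-valued function. -/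
lemma det_hasDerivAt_aux {d : ℕ} (M : ℝ → Matrix (Fin d) (Fin d) ℝ)
    (M' : Matrix (Fin d) (Fin d) ℝ) (t : ℝ)
    (h : ∀ i j, HasDerivAt (fun s => M s i j) (M' i j) t) :
    HasDerivAt (fun s => (M s).det)
      (∑ r, (Matrix.updateRow (M t) r (M' r)).det) t := by
  have key : ∀ σ : Equiv.Perm (Fin d),
      HasDerivAt (fun s => ∏ i, M s (σ i) i)
        (∑ i, (∏ j ∈ univ.erase i, M t (σ j) j) • M' (σ i) i) t :=
    fun σ => HasDerivAt.fun_finsetProd (fun i _ => h (σ i) i)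
  have H : HasDerivAt (fun s => (M s).det)
      (∑ σ : Equiv.Perm (Fin d), (Equiv.Perm.sign σ : ℝ) *
        ∑ i, (∏ j ∈ univ.erase i, M t (σ j) j) • M' (σ i) i) t := by
    simp_rw [Matrix.det_apply']
    exact HasDerivAt.fun_sum fun σ _ => (key σ).const_mul _
  convert H using 1
  simp_rw [Matrix.det_apply']
  rw [Finset.sum_comm]
  refine Finset.sum_congr rfl fun σ _ => ?_
  rw [Finset.mul_sum, ← Equiv.sum_comp σ
    (fun r => (Equiv.Perm.sign σ : ℝ) * ∏ j, (Matrix.updateRow (M t) r (M' r)) (σ j) j)]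
  refine Finset.sum_congr rfl fun i _ => ?_
  congr 1
  rw [← Finset.mul_prod_erase _ _ (Finset.mem_univ i), Matrix.updateRow_self]
  rw [smul_eq_mul, mul_comm]
  congr 1
  refine Finset.prod_congr rfl fun j hj => ?_
  exact congrFun (Matrix.updateRow_ne (σ.injective.ne (Finset.ne_of_mem_erase hj))) j

/-- Liouville's formula: if `J' (t) = A(t) * J(t)` (entrywise) for all `t`, with `A`
continuous, then `det (J t) = det (J 0) * exp (∫_0^t trace (A s) ds)`.
In particular, if `trace (A t) = 0` for all `t` and `J 0 = 1`, then `det (J t) = 1`. -/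
theorem stmt_4 {d : ℕ} (hd : 1 ≤ d)
    (A J : ℝ → Matrix (Fin d) (Fin d) ℝ)
    (hA : Continuous A)
    (hJ : ∀ t i j, HasDerivAt (fun s => J s i j) ((A t * J t) i j) t) :
    (∀ t, (J t).det = (J 0).det * Real.exp (∫ s in (0:ℝ)..t, Matrix.trace (A s))) ∧
    ((∀ t, Matrix.trace (A t) = 0) → J 0 = 1 → ∀ t, (J t).det = 1) := by
  have htr : Continuous fun s => Matrix.trace (A s) := hA.matrix_trace
  have hJdet : ∀ t, HasDerivAt (fun s => (J s).det)
      (Matrix.trace (A t) * (J t).det) t := by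
    intro t
    have H := det_hasDerivAt_aux J (A t * J t) t (fun i j => hJ t i j)
    have hrow : ∀ r, (Matrix.updateRow (J t) r ((A t * J t) r)).det
        = A t r r * (J t).det := by
      intro r
      have : (A t * J t) r = ∑ k, A t r k • J t k := by
        funext j; simp [Matrix.mul_apply]
      rw [this, Matrix.det_updateRow_sum, smul_eq_mul]
    simpa [hrow, Matrix.trace, Matrix.diag, Finset.sum_mul] using H
  set F : ℝ → ℝ := fun t => ∫ s in (0:ℝ)..t, Matrix.trace (A s) with hF
  have hFd : ∀ t, HasDerivAt F (Matrix.trace (A t)) t :=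
    fun t => (htr.integral_hasStrictDerivAt 0 t).hasDerivAt
  have hg : ∀ t, HasDerivAt (fun s => (J s).det * Real.exp (-F s)) 0 t := by
    intro t
    have : HasDerivAt (fun s => (J s).det * Real.exp (-F s)) _ t :=
      (hJdet t).fun_mul (((hFd t).fun_neg).exp)
    convert this using 1
    ring
  have hconst : ∀ t, (J t).det * Real.exp (-F t) = (J 0).det := by
    have := is_const_of_deriv_eq_zero (f := fun s => (J s).det * Real.exp (-F s))
      (fun t => (hg t).differentiableAt) (fun t => (hg t).deriv)
    intro t
    have h0 : F 0 = 0 := intervalIntegral.integral_same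
    simpa [h0] using this t 0
  have main : ∀ t, (J t).det = (J 0).det * Real.exp (F t) := by
    intro t
    have := hconst t
    have hne : Real.exp (-F t) ≠ 0 := Real.exp_ne_zero _
    field_simp [Real.exp_ne_zero] at this ⊢
    rw [← this, mul_assoc, ← Real.exp_add]
    simp
  refine ⟨main, fun htr0 hJ0 t => ?_⟩
  have : F t = 0 := by simp [hF, htr0]
  rw [main t, this, hJ0]
  simp
end

section
/- (One-step error recursion of the neural semi-Lagrangian method) Let Ω ⊆ ℝ^d be a bounded open set, let X : Ω → Ω be a C¹ diffeomorphism of Ω onto itself with d_X := √(inf_{y∈Ω} |det DX(y)|) > 0, and let X̃ : Ω → Ω be a measurable map with ‖X̃(x) − X(x)‖ ≤ ρ for all x ∈ Ω. Let v : ℝ^d → ℝ be Lipschitz with constant K, and let u, w ∈ L²(Ω). Then ‖u − w ∘ X‖_{L²(Ω)} ≤ ‖u − v ∘ X̃‖_{L²(Ω)} + K ρ √(vol(Ω)) + (1/d_X) ‖v − w‖_{L²(Ω)}. (Here u plays the role of the new approximation u_{θ^{n+1}}, v the previous approximation u_{θ^n}, w the exact solution at the previous time, X the exact backward characteristic map and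 X̃ its numerical approximation.) -/
open MeasureTheory ENNReal


lemma toReal_eLpNorm_two {α : Type*} [MeasurableSpace α] {μ : Measure α} {f : α → ℝ}
    (hf : MemLp f 2 μ) :
    (eLpNorm f 2 μ).toReal = Real.sqrt (∫ a, f a ^ 2 ∂μ) := by
  rw [hf.eLpNorm_eq_integral_rpow_norm two_ne_zero ENNReal.ofNat_ne_top,
    ENNReal.toReal_ofReal (by positivity)]
  have h2 : (2 : ℝ≥0∞).toReal = (2 : ℝ) := by norm_num
  rw [h2]
  rw [show (2:ℝ)⁻¹ = 1/2 by norm_num, ← Real.sqrt_eq_rpow]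
  congr 1
  apply integral_congr_ae
  filter_upwards with a
  rw [Real.norm_eq_abs, show ((2:ℝ)) = ((2:ℕ):ℝ) by norm_num, Real.rpow_natCast, sq_abs]


/-- One-step error recursion of the neural semi-Lagrangian method:
`‖u − w ∘ X‖_{L²(Ω)} ≤ ‖u − v ∘ X̃‖_{L²(Ω)} + K ρ √(vol Ω) + (1/d_X) ‖v − w‖_{L²(Ω)}`,
where `X` is a C¹ diffeomorphism of the bounded open set `Ω` onto itself with
`d_X = √(inf_Ω |det DX|) > 0`, `X̃` is a measurable approximation of `X` within
distance `ρ`, and `v` is `K`-Lipschitz. -/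
theorem stmt_7 {d : ℕ} (Ω : Set (EuclideanSpace ℝ (Fin d)))
    (hΩ_open : IsOpen Ω) (hΩ_bdd : Bornology.IsBounded Ω)
    (X Xinv : EuclideanSpace ℝ (Fin d) → EuclideanSpace ℝ (Fin d))
    (hXbij : Set.BijOn X Ω Ω)
    (hXC1 : ContDiffOn ℝ 1 X Ω) (hXinvC1 : ContDiffOn ℝ 1 Xinv Ω)
    (hleft : ∀ x ∈ Ω, Xinv (X x) = x) (hright : ∀ y ∈ Ω, X (Xinv y) = y)
    (X' : EuclideanSpace ℝ (Fin d) →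
      (EuclideanSpace ℝ (Fin d) →L[ℝ] EuclideanSpace ℝ (Fin d)))
    (hX' : ∀ y ∈ Ω, HasFDerivWithinAt X (X' y) Ω y)
    (dX : ℝ)
    (hdX : dX = Real.sqrt (sInf ((fun y => |ContinuousLinearMap.det (X' y)|) '' Ω)))
    (hdX_pos : 0 < dX)
    (Xt : EuclideanSpace ℝ (Fin d) → EuclideanSpace ℝ (Fin d))
    (hXt_meas : Measurable Xt) (hXt_maps : Set.MapsTo Xt Ω Ω)
    (ρ : ℝ) (hρ : ∀ x ∈ Ω, ‖Xt x - X x‖ ≤ ρ)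
    (v : EuclideanSpace ℝ (Fin d) → ℝ) (K : ℝ) (hK : 0 ≤ K)
    (hv_lip : ∀ y z, |v y - v z| ≤ K * ‖y - z‖)
    (u w : EuclideanSpace ℝ (Fin d) → ℝ)
    (hu_meas : Measurable u) (hw_meas : Measurable w)
    (hu_L2 : MemLp u 2 (volume.restrict Ω)) (hw_L2 : MemLp w 2 (volume.restrict Ω)) :
    Real.sqrt (∫ x in Ω, (u x - w (X x)) ^ 2)
      ≤ Real.sqrt (∫ x in Ω, (u x - v (Xt x)) ^ 2)
        + K * ρ * Real.sqrt ((volume Ω).toReal)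
        + (1 / dX) * Real.sqrt (∫ x in Ω, (v x - w x) ^ 2) := by
  rcases Set.eq_empty_or_nonempty Ω with hempty | ⟨x0, hx0⟩
  · simp [hempty]
  set μ := volume.restrict Ω with hμ
  have hΩm : MeasurableSet Ω := hΩ_open.measurableSet
  haveI : IsFiniteMeasure μ := by
    constructor
    rw [hμ, Measure.restrict_apply_univ]
    exact hΩ_bdd.measure_lt_top
  have hρ0 : 0 ≤ ρ := le_trans (norm_nonneg _) (hρ x0 hx0)
  -- v is Lipschitz hence continuous
  have hv_cont : Continuous v := by
    have : LipschitzWith ⟨K, hK⟩ v := by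
      apply LipschitzWith.of_dist_le_mul
      intro y z
      rw [Real.dist_eq, dist_eq_norm]
      exact hv_lip y z
    exact this.continuous
  -- bound for v on Ω
  obtain ⟨r, hr⟩ : ∃ r, ∀ y ∈ Ω, ‖y‖ ≤ r := isBounded_iff_forall_norm_le.mp hΩ_bdd
  set M : ℝ := |v 0| + K * r with hM
  have hvM : ∀ y ∈ Ω, |v y| ≤ M := by
    intro y hy
    calc |v y| ≤ |v y - v 0| + |v 0| := by
          have := abs_sub_abs_le_abs_sub (v y) (v 0); linarith [abs_sub_abs_le_abs_sub (v y) (v 0)]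
      _ ≤ K * ‖y‖ + |v 0| := by
          have := hv_lip y 0; simp only [sub_zero] at this; linarith
      _ ≤ K * r + |v 0| := by
          have := mul_le_mul_of_nonneg_left (hr y hy) hK; linarith
      _ = M := by rw [hM]; ring
  -- measurability
  have hX_aem : AEMeasurable X μ := (hXC1.continuousOn).aemeasurable hΩm
  have hvX_aem : AEMeasurable (fun x => v (X x)) μ :=
    hv_cont.measurable.comp_aemeasurable hX_aem
  have hwX_aem : AEMeasurable (fun x => w (X x)) μ :=
    hw_meas.comp_aemeasurable hX_aem
  have hvXt_meas : Measurable (fun x => v (Xt x)) := hv_cont.measurable.comp hXt_meas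
  -- L² memberships for bounded functions
  have hvXt_L2 : MemLp (fun x => v (Xt x)) 2 μ := by
    apply MemLp.of_bound hvXt_meas.aestronglyMeasurable M
    filter_upwards [ae_restrict_mem hΩm] with x hx
    exact hvM _ (hXt_maps hx)
  have hvX_L2 : MemLp (fun x => v (X x)) 2 μ := by
    apply MemLp.of_bound hvX_aem.aestronglyMeasurable M
    filter_upwards [ae_restrict_mem hΩm] with x hx
    exact hvM _ (hXbij.mapsTo hx)
  have hv_L2 : MemLp v 2 μ := by
    apply MemLp.of_bound hv_cont.aestronglyMeasurable M
    filter_upwards [ae_restrict_mem hΩm] with x hx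
    exact hvM _ hx
  have hB_L2 : MemLp (fun x => v (Xt x) - v (X x)) 2 μ := by
    apply MemLp.of_bound (hvXt_meas.aemeasurable.sub hvX_aem).aestronglyMeasurable (K * ρ)
    filter_upwards [ae_restrict_mem hΩm] with x hx
    calc ‖v (Xt x) - v (X x)‖ ≤ K * ‖Xt x - X x‖ := hv_lip _ _
      _ ≤ K * ρ := mul_le_mul_of_nonneg_left (hρ x hx) hK
  -- change of variables setup
  set g : EuclideanSpace ℝ (Fin d) → ℝ := fun y => (v y - w y) ^ 2 with hg
  have hvw_L2 : MemLp (fun y => v y - w y) 2 μ := hv_L2.sub hw_L2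
  have hg_int : Integrable g μ :=
    (memLp_two_iff_integrable_sq hvw_L2.aestronglyMeasurable).mp hvw_L2
  have himg : X '' Ω = Ω := hXbij.image_eq
  have hCoV : ∫ y in Ω, g y = ∫ x in Ω, |(X' x).det| • g (X x) := by
    have h := integral_image_eq_integral_abs_det_fderiv_smul volume hΩm hX' hXbij.injOn g
    rwa [himg] at h
  have hCoV_int : IntegrableOn (fun x => |(X' x).det| • g (X x)) Ω volume := by
    rw [← integrableOn_image_iff_integrableOn_abs_det_fderiv_smul volume hΩm hX' hXbij.injOn g,
      himg]
    exact hg_int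
  -- lower bound for the determinant
  set S := (fun y => |ContinuousLinearMap.det (X' y)|) '' Ω with hS
  have hS_nonneg : ∀ b ∈ S, 0 ≤ b := by
    rintro b ⟨y, _, rfl⟩; exact abs_nonneg _
  have hsInf_nonneg : 0 ≤ sInf S :=
    le_csInf ⟨_, ⟨x0, hx0, rfl⟩⟩ hS_nonneg
  have hdX_sq : dX ^ 2 = sInf S := by
    rw [hdX, Real.sq_sqrt hsInf_nonneg]
  have hdet : ∀ x ∈ Ω, dX ^ 2 ≤ |(X' x).det| := by
    intro x hx
    rw [hdX_sq]
    exact csInf_le ⟨0, fun b hb => hS_nonneg b hb⟩ ⟨x, hx, rfl⟩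
  have hdX2_pos : (0:ℝ) < dX ^ 2 := by positivity
  -- integrability of (v∘X - w∘X)^2
  have hC_aem : AEMeasurable (fun x => v (X x) - w (X x)) μ := hvX_aem.sub hwX_aem
  have hC2_int : Integrable (fun x => (v (X x) - w (X x)) ^ 2) μ := by
    apply Integrable.mono' (hCoV_int.const_mul (dX ^ 2)⁻¹)
    · exact ((hC_aem.pow_const 2).congr (by filter_upwards with x; ring)).aestronglyMeasurable
    · filter_upwards [ae_restrict_mem hΩm] with x hx
      rw [Real.norm_eq_abs, abs_of_nonneg (by positivity), smul_eq_mul]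
      rw [hg]
      calc (v (X x) - w (X x)) ^ 2
          = (dX ^ 2)⁻¹ * (dX ^ 2 * (v (X x) - w (X x)) ^ 2) := by
            field_simp
        _ ≤ (dX ^ 2)⁻¹ * (|(X' x).det| * (v (X x) - w (X x)) ^ 2) := by
            apply mul_le_mul_of_nonneg_left _ (by positivity)
            exact mul_le_mul_of_nonneg_right (hdet x hx) (by positivity)
  have hC_L2 : MemLp (fun x => v (X x) - w (X x)) 2 μ :=
    (memLp_two_iff_integrable_sq hC_aem.aestronglyMeasurable).mpr hC2_int
  have hwX_L2 : MemLp (fun x => w (X x)) 2 μ := by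
    have h := hvX_L2.sub hC_L2
    have he : ((fun x => v (X x)) - fun x => v (X x) - w (X x)) = fun x => w (X x) := by
      funext x; simp only [Pi.sub_apply]; ring
    rwa [he] at h
  have hA_L2 : MemLp (fun x => u x - v (Xt x)) 2 μ := hu_L2.sub hvXt_L2
  have hLHS_L2 : MemLp (fun x => u x - w (X x)) 2 μ := hu_L2.sub hwX_L2
  -- triangle inequality in eLpNorm
  have hsum : (fun x => u x - w (X x))
      = (fun x => u x - v (Xt x)) + ((fun x => v (Xt x) - v (X x)) + fun x => v (X x) - w (X x)) := by
    funext x; simp only [Pi.add_apply]; ring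
  have hBC_L2 : MemLp ((fun x => v (Xt x) - v (X x)) + fun x => v (X x) - w (X x)) 2 μ :=
    hB_L2.add hC_L2
  have htri : eLpNorm (fun x => u x - w (X x)) 2 μ
      ≤ eLpNorm (fun x => u x - v (Xt x)) 2 μ
        + (eLpNorm (fun x => v (Xt x) - v (X x)) 2 μ + eLpNorm (fun x => v (X x) - w (X x)) 2 μ) := by
    rw [hsum]
    calc eLpNorm _ 2 μ
        ≤ eLpNorm (fun x => u x - v (Xt x)) 2 μ
          + eLpNorm ((fun x => v (Xt x) - v (X x)) + fun x => v (X x) - w (X x)) 2 μ :=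
          eLpNorm_add_le hA_L2.aestronglyMeasurable hBC_L2.aestronglyMeasurable one_le_two
      _ ≤ _ := by
          gcongr
          exact eLpNorm_add_le hB_L2.aestronglyMeasurable hC_L2.aestronglyMeasurable one_le_two
  have htri' : (eLpNorm (fun x => u x - w (X x)) 2 μ).toReal
      ≤ (eLpNorm (fun x => u x - v (Xt x)) 2 μ).toReal
        + ((eLpNorm (fun x => v (Xt x) - v (X x)) 2 μ).toReal
          + (eLpNorm (fun x => v (X x) - w (X x)) 2 μ).toReal) := by
    have h1 : eLpNorm (fun x => u x - v (Xt x)) 2 μ ≠ ⊤ := hA_L2.eLpNorm_ne_top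
    have h2 : eLpNorm (fun x => v (Xt x) - v (X x)) 2 μ ≠ ⊤ := hB_L2.eLpNorm_ne_top
    have h3 : eLpNorm (fun x => v (X x) - w (X x)) 2 μ ≠ ⊤ := hC_L2.eLpNorm_ne_top
    have := ENNReal.toReal_mono (by finiteness) htri
    rwa [ENNReal.toReal_add h1 (by finiteness), ENNReal.toReal_add h2 h3] at this
  rw [toReal_eLpNorm_two hLHS_L2, toReal_eLpNorm_two hA_L2, toReal_eLpNorm_two hB_L2,
    toReal_eLpNorm_two hC_L2] at htri'
  -- bound the B term
  have hB2_int : Integrable (fun x => (v (Xt x) - v (X x)) ^ 2) μ :=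
    (memLp_two_iff_integrable_sq hB_L2.aestronglyMeasurable).mp hB_L2
  have hBbound : Real.sqrt (∫ x, (v (Xt x) - v (X x)) ^ 2 ∂μ)
      ≤ K * ρ * Real.sqrt ((volume Ω).toReal) := by
    have hint : ∫ x, (v (Xt x) - v (X x)) ^ 2 ∂μ ≤ (K * ρ) ^ 2 * (volume Ω).toReal := by
      have : ∫ x, (v (Xt x) - v (X x)) ^ 2 ∂μ ≤ ∫ _x, (K * ρ) ^ 2 ∂μ := by
        apply integral_mono_ae hB2_int (integrable_const _)
        filter_upwards [ae_restrict_mem hΩm] with x hx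
        have h1 : |v (Xt x) - v (X x)| ≤ K * ρ :=
          le_trans (hv_lip _ _) (mul_le_mul_of_nonneg_left (hρ x hx) hK)
        calc (v (Xt x) - v (X x)) ^ 2 = |v (Xt x) - v (X x)| ^ 2 := (sq_abs _).symm
          _ ≤ (K * ρ) ^ 2 := by
              apply pow_le_pow_left₀ (abs_nonneg _) h1
      rwa [integral_const, hμ, measureReal_restrict_apply_univ, measureReal_def, smul_eq_mul, mul_comm] at this
    calc Real.sqrt (∫ x, (v (Xt x) - v (X x)) ^ 2 ∂μ)
        ≤ Real.sqrt ((K * ρ) ^ 2 * (volume Ω).toReal) := Real.sqrt_le_sqrt hint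
      _ = K * ρ * Real.sqrt ((volume Ω).toReal) := by
          rw [Real.sqrt_mul (by positivity), Real.sqrt_sq (by positivity)]
  -- bound the C term
  have hCbound : Real.sqrt (∫ x, (v (X x) - w (X x)) ^ 2 ∂μ)
      ≤ (1 / dX) * Real.sqrt (∫ x in Ω, (v x - w x) ^ 2) := by
    have hint : ∫ x, (v (X x) - w (X x)) ^ 2 ∂μ ≤ (dX ^ 2)⁻¹ * ∫ y in Ω, g y := by
      have h1 : ∫ x, (v (X x) - w (X x)) ^ 2 ∂μ
          ≤ ∫ x, (dX ^ 2)⁻¹ * (|(X' x).det| • g (X x)) ∂μ := by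
        apply integral_mono_ae hC2_int (hCoV_int.const_mul _)
        filter_upwards [ae_restrict_mem hΩm] with x hx
        rw [smul_eq_mul, hg]
        calc (v (X x) - w (X x)) ^ 2
            = (dX ^ 2)⁻¹ * (dX ^ 2 * (v (X x) - w (X x)) ^ 2) := by field_simp
          _ ≤ (dX ^ 2)⁻¹ * (|(X' x).det| * (v (X x) - w (X x)) ^ 2) := by
              apply mul_le_mul_of_nonneg_left _ (by positivity)
              exact mul_le_mul_of_nonneg_right (hdet x hx) (by positivity)
      rwa [integral_const_mul, ← hCoV] at h1
    calc Real.sqrt (∫ x, (v (X x) - w (X x)) ^ 2 ∂μ)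
        ≤ Real.sqrt ((dX ^ 2)⁻¹ * ∫ y in Ω, g y) := Real.sqrt_le_sqrt hint
      _ = (1 / dX) * Real.sqrt (∫ x in Ω, (v x - w x) ^ 2) := by
          rw [Real.sqrt_mul (by positivity), Real.sqrt_inv, Real.sqrt_sq hdX_pos.le, one_div]
  calc Real.sqrt (∫ x in Ω, (u x - w (X x)) ^ 2)
      ≤ Real.sqrt (∫ x in Ω, (u x - v (Xt x)) ^ 2)
        + (Real.sqrt (∫ x, (v (Xt x) - v (X x)) ^ 2 ∂μ)
          + Real.sqrt (∫ x, (v (X x) - w (X x)) ^ 2 ∂μ)) := htri'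
    _ ≤ _ := by
        rw [add_assoc]
        gcongr
end
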